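/- Let T(z) = 1 - √(1-2z) and fix integers k ≥ 1 and n ≥ k. Then the coefficient of z^n in T(z)^k equals (k/n) · 2^{k-n} · C(2n-k-1, n-k), where C denotes the binomial coefficient. -/

import Mathlib

open PowerSeries Finset Filter
open scoped NNReal ENNReal Topology

noncomputable def tco : ℕ → ℝ := fun n => if n = 0 then 0 else 2 * (catalan (n-1) : ℝ) / 2 ^ n

noncomputable def TT : PowerSeries ℝ := PowerSeries.mk tco

lemma coeff_TT (n : ℕ) : PowerSeries.coeff (R := ℝ) n TT = tco n := PowerSeries.coeff_mk n tco

lemma tco_zero : tco 0 = 0 := rfl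

lemma tco_succ (m : ℕ) : tco (m+1) = 2 * (catalan m : ℝ) / 2 ^ (m+1) := by
  simp [tco]

lemma TT_sq : TT * TT = PowerSeries.C (R := ℝ) 2 * TT - PowerSeries.C (R := ℝ) 2 * PowerSeries.X := by
  ext n
  rw [PowerSeries.coeff_mul, Finset.Nat.sum_antidiagonal_eq_sum_range_succ_mk]
  simp only [map_sub, PowerSeries.coeff_C_mul, coeff_TT, PowerSeries.coeff_X]
  match n with
  | 0 => simp [tco_zero]
  | 1 =>
    rw [Finset.sum_range_succ, Finset.sum_range_succ]
    simp [tco_zero, tco_succ]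
  | (m+2) =>
    rw [Finset.sum_range_succ', Finset.sum_range_succ]
    have e3 : m + 2 - (m + 1 + 1) = 0 := by omega
    rw [e3]
    simp only [tco_zero, mul_zero, zero_mul, add_zero]
    have h1 : ∀ i ∈ Finset.range (m+1),
        tco (i+1) * tco (m+2-(i+1)) = 4 / 2^(m+2) * ((catalan i : ℝ) * catalan (m - i)) := by
      intro i hi
      rw [Finset.mem_range] at hi
      have e1 : m + 2 - (i+1) = (m - i) + 1 := by omega
      rw [e1, tco_succ, tco_succ, div_mul_div_comm, ← pow_add]
      have e2 : i + 1 + (m - i + 1) = m + 2 := by omega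
      rw [e2]
      ring
    rw [Finset.sum_congr rfl h1, ← Finset.mul_sum]
    have h2 : ∑ i ∈ Finset.range (m+1), ((catalan i : ℝ) * catalan (m - i)) = catalan (m+1) := by
      rw [catalan_succ', Finset.Nat.sum_antidiagonal_eq_sum_range_succ_mk]
      push_cast
      rfl
    rw [h2, tco_succ]
    have : ¬ (m + 2 = 1) := by omega
    rw [if_neg this, pow_succ]
    ring

lemma X_dvd_TT : (PowerSeries.X : PowerSeries ℝ) ∣ TT :=
  PowerSeries.X_dvd_iff.2 (by simp [TT, ← tco_zero, PowerSeries.constantCoeff_mk])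

lemma coeff_TT_pow_eq_zero {k n : ℕ} (h : n < k) : PowerSeries.coeff (R := ℝ) n (TT^k) = 0 :=
  (PowerSeries.X_pow_dvd_iff.1 (pow_dvd_pow_of_dvd X_dvd_TT k)) n h

lemma nat1 (m : ℕ) : (m+1) * catalan m = (2*m).choose m := by
  rw [succ_mul_catalan_eq_centralBinom, Nat.centralBinom]

lemma nat2 (m : ℕ) : (2*m+2).choose (m+1) = 2 * ((2*m+1).choose m) := by
  have h1 : (2*m+2).choose (m+1) = (2*m+1).choose m + (2*m+1).choose (m+1) :=
    Nat.choose_succ_succ' (2*m+1) m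
  rw [h1, Nat.choose_symm_half]
  ring

lemma key (k : ℕ) : ∀ m : ℕ, PowerSeries.coeff (R := ℝ) (k+1+m) (TT^(k+1)) =
    ((k:ℝ)+1)/((k:ℝ)+1+m) * (2^(k+1)/2^(k+1+m)) * ((k+2*m).choose m : ℝ) := by
  induction k using Nat.strong_induction_on with
  | _ k ih =>
    match k with
    | 0 =>
      intro m
      rw [pow_one, coeff_TT, show 0+1+m = m+1 by omega, tco_succ]
      have h1 : ((m:ℝ)+1) * (catalan m : ℝ) = ((2*m).choose m : ℝ) := by
        exact_mod_cast congrArg (Nat.cast : ℕ → ℝ) (nat1 m)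
      have hm : (m:ℝ)+1 ≠ 0 := by positivity
      have hp : (2:ℝ)^(m+1) ≠ 0 := by positivity
      rw [show ((0:ℕ):ℝ) + 1 + (m:ℝ) = (m:ℝ)+1 by push_cast; ring]
      field_simp
      rw [show 0 + 2*m = 2*m by omega]; linear_combination 2 * h1
    | 1 =>
      intro m
      have hsq : TT^2 = PowerSeries.C (R := ℝ) 2 * TT - PowerSeries.C (R := ℝ) 2 * PowerSeries.X := by
        rw [sq]; exact TT_sq
      rw [hsq]
      simp only [map_sub, PowerSeries.coeff_C_mul, coeff_TT, PowerSeries.coeff_X]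
      rw [show 1+1+m = (m+1)+1 by omega, tco_succ]
      rw [if_neg (by omega : ¬ (m+1+1 = 1))]
      have h1 : ((m:ℝ)+2) * (catalan (m+1) : ℝ) = 2 * ((2*m+1).choose m : ℝ) := by
        have := nat1 (m+1)
        rw [show 2*(m+1) = 2*m+2 by ring, nat2 m] at this
        exact_mod_cast congrArg (Nat.cast : ℕ → ℝ) this
      have hm : (m:ℝ)+2 ≠ 0 := by positivity
      have hp : (2:ℝ)^(m+1+1) ≠ 0 := by positivity
      rw [show ((1:ℕ):ℝ) + 1 + (m:ℝ) = (m:ℝ)+2 by push_cast; ring]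
      rw [show (1+2*m : ℕ) = 2*m+1 by omega]
      field_simp
      linear_combination 4 * h1
    | (k+2) =>
      intro m
      have hpow : TT^(k+2+1) = PowerSeries.C (R := ℝ) 2 * TT^(k+2) -
          PowerSeries.C (R := ℝ) 2 * (PowerSeries.X * TT^(k+1)) := by
        have h0 : TT^(k+2+1) = TT^(k+1) * (TT*TT) := by ring
        rw [h0, TT_sq]; ring
      rw [hpow]
      simp only [map_sub, PowerSeries.coeff_C_mul]
      rw [show k+2+1+m = (k+2+m)+1 by omega, PowerSeries.coeff_succ_X_mul]
      have h1 := ih (k+1) (by omega) (m+1)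
      have h2 := ih k (by omega) (m+1)
      rw [show k+1+1+(m+1) = k+2+m+1 by omega] at h1
      rw [show k+1+(m+1) = k+2+m by omega] at h2
      rw [show k+1+2*(m+1) = (k+2+2*m)+1 by omega,
        Nat.choose_succ_succ' (k+2+2*m) m] at h1
      rw [show k+2*(m+1) = k+2+2*m by omega] at h2
      rw [Nat.cast_add ((k+2+2*m).choose m) ((k+2+2*m).choose (m+1))] at h1
      have hrel : (((k+2+2*m).choose (m+1) : ℕ) : ℝ) * ((m:ℝ)+1)
          = (((k+2+2*m).choose m : ℕ) : ℝ) * ((k:ℝ)+(m:ℝ)+2) := by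
        have h := Nat.choose_succ_right_eq (k+2+2*m) m
        rw [show k+2+2*m - m = k+m+2 by omega] at h
        exact_mod_cast congrArg (Nat.cast : ℕ → ℝ) h
      set a : ℝ := (((k+2+2*m).choose m : ℕ) : ℝ) with ha
      set b : ℝ := (((k+2+2*m).choose (m+1) : ℕ) : ℝ) with hbdef
      have hb : b = a * ((k:ℝ)+(m:ℝ)+2) / ((m:ℝ)+1) := by
        rw [eq_div_iff (by positivity)]; exact hrel
      rw [h1, h2, hb]
      push_cast
      have d3 : (m:ℝ)+1 ≠ 0 := by positivity
      have d1 : (k:ℝ)+1+1+1+((m:ℝ)+1) ≠ 0 := by positivity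
      have d2 : (k:ℝ)+1+1+((m:ℝ)+1) ≠ 0 := by positivity
      field_simp
      ring

lemma coeff_TT_pow (k n : ℕ) (hk : 1 ≤ k) (hn : k ≤ n) :
    PowerSeries.coeff (R := ℝ) n (TT^k) = (k:ℝ)/n * (2^k/2^n) * (((2*n-k-1).choose (n-k) : ℕ) : ℝ) := by
  obtain ⟨k', rfl⟩ : ∃ k', k = k'+1 := ⟨k-1, by omega⟩
  obtain ⟨m, rfl⟩ : ∃ m, n = k'+1+m := ⟨n-(k'+1), by omega⟩
  rw [key k' m]
  rw [show 2*(k'+1+m)-(k'+1)-1 = k'+2*m by omega, show k'+1+m-(k'+1) = m by omega]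
  push_cast
  ring

noncomputable def cco (k n : ℕ) : ℝ := PowerSeries.coeff (R := ℝ) n (TT^k)

lemma catalan_le_four_pow (m : ℕ) : catalan m ≤ 4^m := by
  have h1 : catalan m ≤ m.centralBinom := by
    rw [catalan_eq_centralBinom_div]
    exact Nat.div_le_self _ _
  have h2 : m.centralBinom ≤ 4^m := by
    have h3 : (2*m).choose m ≤ ∑ i ∈ Finset.range (2*m+1), (2*m).choose i :=
      Finset.single_le_sum (fun i _ => Nat.zero_le _) (by rw [Finset.mem_range]; omega)
    rw [Nat.sum_range_choose] at h3
    calc m.centralBinom = (2*m).choose m := rfl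
      _ ≤ 2^(2*m) := h3
      _ = 4^m := by rw [pow_mul]; norm_num
  omega

lemma tco_le (n : ℕ) : |tco n| ≤ 2^n := by
  match n with
  | 0 => simp [tco_zero]
  | (m+1) =>
    rw [tco_succ]
    have h0 : (0:ℝ) ≤ 2 * (catalan m : ℝ) / 2 ^ (m+1) := by positivity
    rw [abs_of_nonneg h0, div_le_iff₀ (by positivity)]
    have : ((catalan m : ℕ) : ℝ) ≤ 4^m := by exact_mod_cast catalan_le_four_pow m
    calc (2:ℝ) * catalan m ≤ 2 * 4^m := by linarith
      _ = 2^(2*m+1) := by rw [show (4:ℝ) = 2^2 by norm_num, ← pow_mul]; ring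
      _ ≤ 2^(m+1) * 2^(m+1) := by rw [← pow_add]; apply pow_le_pow_right₀ (by norm_num); omega

lemma cco_le (k n : ℕ) : |cco k n| ≤ 2^n * ((n:ℝ)+1)^k := by
  induction k generalizing n with
  | zero =>
    simp only [cco, pow_zero, PowerSeries.coeff_one]
    rw [mul_one]
    split_ifs with h
    · rw [abs_one]
      exact one_le_pow₀ (by norm_num)
    · rw [abs_zero]
      positivity
  | succ k ih =>
    have h : cco (k+1) n = ∑ p ∈ Finset.HasAntidiagonal.antidiagonal n, tco p.1 * cco k p.2 := by
      rw [cco, pow_succ' TT k, PowerSeries.coeff_mul]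
      exact Finset.sum_congr rfl (fun p _ => by rw [coeff_TT]; rfl)
    rw [h]
    calc |∑ p ∈ Finset.HasAntidiagonal.antidiagonal n, tco p.1 * cco k p.2|
        ≤ ∑ p ∈ Finset.HasAntidiagonal.antidiagonal n, |tco p.1 * cco k p.2| := Finset.abs_sum_le_sum_abs _ _
      _ ≤ ∑ p ∈ Finset.HasAntidiagonal.antidiagonal n, 2^n * ((n:ℝ)+1)^k := by
          apply Finset.sum_le_sum
          intro p hp
          rw [Finset.HasAntidiagonal.mem_antidiagonal] at hp
          rw [abs_mul]
          have h1 := tco_le p.1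
          have h2 := ih p.2
          have h3 : (0:ℝ) ≤ |cco k p.2| := abs_nonneg _
          have h4 : |tco p.1| * |cco k p.2| ≤ 2^p.1 * (2^p.2 * ((p.2:ℝ)+1)^k) := by
            apply mul_le_mul h1 h2 h3 (by positivity)
          calc |tco p.1| * |cco k p.2| ≤ 2^p.1 * (2^p.2 * ((p.2:ℝ)+1)^k) := h4
            _ = (2^(p.1+p.2) : ℝ) * ((p.2:ℝ)+1)^k := by rw [pow_add]; ring
            _ ≤ 2^n * ((n:ℝ)+1)^k := by
                rw [hp]
                have : ((p.2:ℝ)+1)^k ≤ ((n:ℝ)+1)^k := by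
                  apply pow_le_pow_left₀ (by positivity)
                  have : p.2 ≤ n := by omega
                  have h6 := (Nat.cast_le (α := ℝ)).2 this
                  push_cast
                  linarith
                nlinarith [pow_pos (show (0:ℝ) < 2 by norm_num) n]
      _ = ((n:ℕ)+1) • (2^n * ((n:ℝ)+1)^k) := by
          rw [Finset.sum_const, Finset.Nat.card_antidiagonal]
      _ = 2^n * ((n:ℝ)+1)^(k+1) := by
          rw [nsmul_eq_mul]
          push_cast
          ring

lemma summable_aux (k : ℕ) {q : ℝ} (h0 : 0 ≤ q) (h1 : q < 1) :
    Summable (fun n : ℕ => ((n:ℝ)+1)^k * q^n) := by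
  have hs1 : Summable (fun n : ℕ => (2:ℝ)^k * ((n:ℝ)^k * q^n)) := by
    apply Summable.mul_left
    exact summable_pow_mul_geometric_of_norm_lt_one k (by rwa [Real.norm_eq_abs, abs_of_nonneg h0])
  have hs2 : Summable (fun n : ℕ => (2:ℝ)^k * q^n) :=
    (summable_geometric_of_lt_one h0 h1).mul_left _
  refine Summable.of_nonneg_of_le (fun n => by positivity) (fun n => ?_) (hs1.add hs2)
  have hb : ((n:ℝ)+1)^k ≤ 2^k * (n:ℝ)^k + 2^k := by
    match n with
    | 0 =>
      have h5 : (1:ℝ) ≤ 2^k := one_le_pow₀ (by norm_num)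
      have h6 : (0:ℝ) ≤ 2^k * (0:ℝ)^k := by positivity
      norm_num
      linarith
    | (m+1) =>
      have h2 : ((m:ℝ)+1+1) ≤ 2*((m:ℝ)+1) := by linarith [Nat.cast_nonneg (α := ℝ) m]
      have h3 : (((m+1:ℕ):ℝ)+1)^k ≤ (2*((m+1:ℕ):ℝ))^k := by
        apply pow_le_pow_left₀ (by positivity)
        push_cast
        linarith
      calc (((m+1:ℕ):ℝ)+1)^k ≤ (2*((m+1:ℕ):ℝ))^k := h3
        _ = 2^k * ((m+1:ℕ):ℝ)^k := by rw [mul_pow]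
        _ ≤ 2^k * ((m+1:ℕ):ℝ)^k + 2^k := by
            have : (0:ℝ) < 2^k := by positivity
            linarith
  calc ((n:ℝ)+1)^k * q^n ≤ (2^k * (n:ℝ)^k + 2^k) * q^n := by
        apply mul_le_mul_of_nonneg_right hb (by positivity)
    _ = 2^k * ((n:ℝ)^k * q^n) + 2^k * q^n := by ring

lemma summable_cco (k : ℕ) {y : ℝ} (hy : |y| ≤ 1/8) :
    Summable (fun n : ℕ => ‖cco k n * y^n‖) := by
  refine Summable.of_nonneg_of_le (fun n => norm_nonneg _) (fun n => ?_)
    (summable_aux k (q := 1/4) (by norm_num) (by norm_num))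
  rw [norm_mul, norm_pow, Real.norm_eq_abs, Real.norm_eq_abs]
  calc |cco k n| * |y|^n ≤ (2^n * ((n:ℝ)+1)^k) * |y|^n := by
        apply mul_le_mul_of_nonneg_right (cco_le k n) (by positivity)
    _ = ((n:ℝ)+1)^k * (2*|y|)^n := by rw [mul_pow]; ring
    _ ≤ ((n:ℝ)+1)^k * (1/4)^n := by
        apply mul_le_mul_of_nonneg_left _ (by positivity)
        apply pow_le_pow_left₀ (by positivity)
        linarith

noncomputable def G : ℝ → ℝ := fun z => ∑' n, cco 1 n * z^n

lemma hasSum_cco (k : ℕ) {y : ℝ} (hy : |y| ≤ 1/8) :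
    HasSum (fun n => cco k n * y^n) (G y ^ k) := by
  induction k with
  | zero =>
    rw [pow_zero]
    have he : (fun n => cco 0 n * y^n) = (fun n => if n = 0 then (1:ℝ) else 0) := by
      funext n
      simp only [cco, pow_zero, PowerSeries.coeff_one]
      split_ifs with h
      · subst h; simp
      · simp
    rw [he]
    exact hasSum_ite_eq 0 1
  | succ k ihk =>
    have hf := summable_cco 1 hy
    have hg := summable_cco k hy
    rw [(Summable.hasSum_iff ((summable_cco (k+1) hy).of_norm))]
    have step1 : ∀ n : ℕ, cco (k+1) n * y^n
        = ∑ p ∈ Finset.HasAntidiagonal.antidiagonal n, (cco 1 p.1 * y^p.1) * (cco k p.2 * y^p.2) := by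
      intro n
      have hc : cco (k+1) n = ∑ p ∈ Finset.HasAntidiagonal.antidiagonal n, cco 1 p.1 * cco k p.2 := by
        rw [cco, pow_succ' TT k, PowerSeries.coeff_mul]
        exact Finset.sum_congr rfl (fun p _ => by rw [cco, cco, pow_one])
      rw [hc, Finset.sum_mul]
      apply Finset.sum_congr rfl
      intro p hp
      rw [Finset.HasAntidiagonal.mem_antidiagonal] at hp
      rw [← hp, pow_add]
      ring
    calc ∑' n, cco (k+1) n * y^n
        = ∑' n, ∑ p ∈ Finset.HasAntidiagonal.antidiagonal n, (cco 1 p.1 * y^p.1) * (cco k p.2 * y^p.2) :=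
          tsum_congr step1
      _ = (∑' n, cco 1 n * y^n) * (∑' n, cco k n * y^n) :=
          (tsum_mul_tsum_eq_tsum_sum_antidiagonal_of_summable_norm hf hg).symm
      _ = G y * G y ^ k := by rw [ihk.tsum_eq]; rfl
      _ = G y ^ (k+1) := (pow_succ' _ _).symm

noncomputable def pser (k : ℕ) : FormalMultilinearSeries ℝ ℝ ℝ :=
  FormalMultilinearSeries.ofScalars ℝ (fun n => cco k n)

lemma hasFPS (k : ℕ) :
    HasFPowerSeriesOnBall (fun z => G z ^ k) (pser k) 0 ((1/8 : ℝ≥0) : ℝ≥0∞) := by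
  constructor
  · apply FormalMultilinearSeries.le_radius_of_summable (r := (1/8 : ℝ≥0))
    have h18 : |(1/8 : ℝ)| ≤ 1/8 := by
      rw [abs_of_nonneg] <;> norm_num
    apply (summable_cco k h18).congr
    intro n
    rw [norm_mul, norm_pow, Real.norm_eq_abs, Real.norm_eq_abs]
    simp only [pser, FormalMultilinearSeries.ofScalars_norm, Real.norm_eq_abs]
    congr 1
    rw [abs_of_nonneg (by norm_num : (0:ℝ) ≤ 1/8)]
    push_cast
    norm_num
  · norm_num
  · intro y hy
    rw [mem_emetric_ball_zero_iff, enorm_eq_nnnorm, ENNReal.coe_lt_coe, ← NNReal.coe_lt_coe,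
      coe_nnnorm, Real.norm_eq_abs] at hy
    have hy' : |y| ≤ 1/8 := le_of_lt (by exact_mod_cast hy)
    have := hasSum_cco k hy'
    rw [zero_add]
    convert this using 2 with n
    · rfl
    simp only [pser]
    rw [FormalMultilinearSeries.ofScalars_apply_eq, smul_eq_mul]

lemma G_zero : G 0 = 0 := by
  have h : HasSum (fun n => cco 1 n * (0:ℝ)^n) (G 0 ^ 1) := hasSum_cco 1 (by norm_num)
  rw [pow_one] at h
  have h2 : HasSum (fun n => cco 1 n * (0:ℝ)^n) 0 := by
    have he : (fun n => cco 1 n * (0:ℝ)^n) = (fun n : ℕ => if n = 0 then (0:ℝ) else 0) := by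
      funext n
      split_ifs with hn
      · subst hn
        simp [cco, coeff_TT, tco_zero, pow_one]
      · rw [zero_pow hn, mul_zero]
    rw [he]
    simpa using hasSum_ite_eq 0 (0:ℝ)
  exact h.unique h2

lemma G_cont : ContinuousAt G 0 := by
  have h := ((hasFPS 1).hasFPowerSeriesAt).continuousAt
  simp only [pow_one] at h
  exact h

lemma G_sq {y : ℝ} (hy : |y| ≤ 1/8) : G y ^ 2 = 2 * G y - 2 * y := by
  have h2 := hasSum_cco 2 hy
  have hc : ∀ n, cco 2 n = 2 * cco 1 n - 2 * (if n = 1 then (1:ℝ) else 0) := by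
    intro n
    rw [cco, sq, TT_sq]
    simp only [map_sub, PowerSeries.coeff_C_mul, PowerSeries.coeff_X, cco, pow_one]
  have he : (fun n => cco 2 n * y^n)
      = (fun n => 2 * (cco 1 n * y^n) - (if n = 1 then 2 * y else 0)) := by
    funext n
    rw [hc n]
    split_ifs with hn
    · subst hn
      ring_nf
    · ring
  rw [he] at h2
  have ha : HasSum (fun n => 2 * (cco 1 n * y^n)) (2 * (G y ^ 1)) :=
    (hasSum_cco 1 hy).mul_left 2
  have hb : HasSum (fun n : ℕ => if n = 1 then 2 * y else 0) (2 * y) := hasSum_ite_eq 1 (2*y)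
  have h4 := h2.unique (ha.sub hb)
  rw [pow_one] at h4
  linarith

lemma iter_deriv (k n : ℕ) :
    iteratedDeriv n (fun z => G z ^ k) 0 = (n.factorial : ℝ) * cco k n := by
  have h := (hasFPS k).factorial_smul (1 : ℝ) n
  rw [iteratedDeriv_eq_iteratedFDeriv, ← h]
  simp only [pser]
  rw [FormalMultilinearSeries.ofScalars_apply_eq, smul_eq_mul, nsmul_eq_mul]
  norm_num

/-- For `1 ≤ k ≤ n`, the `n`-th Maclaurin coefficient of `T(z)^k` with `T(z) = 1 - √(1-2z)`
equals `(k/n) · 2^{k-n} · C(2n-k-1, n-k)`. -/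
theorem stmt_4 (k n : ℕ) (hk : 1 ≤ k) (hn : k ≤ n) :
    iteratedDeriv n (fun z : ℝ => (1 - Real.sqrt (1 - 2 * z)) ^ k) 0 / Nat.factorial n =
      (k : ℝ) / n * (2 : ℝ) ^ ((k : ℤ) - (n : ℤ)) *
        (Nat.choose (2 * n - k - 1) (n - k) : ℝ) := by
  have hev : (fun z : ℝ => (1 - Real.sqrt (1 - 2 * z)) ^ k) =ᶠ[𝓝 (0:ℝ)] (fun z => G z ^ k) := by
    have h8 : ∀ᶠ z : ℝ in 𝓝 0, |z| ≤ 1/8 := by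
      have hball := Metric.ball_mem_nhds (0:ℝ) (by norm_num : (0:ℝ) < 1/8)
      filter_upwards [hball] with z hz
      rw [Metric.mem_ball, Real.dist_eq, sub_zero] at hz
      linarith
    have hlt : ∀ᶠ z : ℝ in 𝓝 0, G z < 1 := by
      have := G_cont.tendsto
      rw [G_zero] at this
      exact this.eventually_lt_const (by norm_num)
    filter_upwards [h8, hlt] with z h1 h2
    have hsq : (1 - G z)^2 = 1 - 2*z := by
      have := G_sq h1
      ring_nf
      ring_nf at this
      linarith
    have h1G : 0 ≤ 1 - G z := by linarith
    have hs : Real.sqrt (1 - 2*z) = 1 - G z := by rw [← hsq, Real.sqrt_sq h1G]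
    rw [hs]
    ring_nf
  rw [Filter.EventuallyEq.iteratedDeriv_eq n hev, iter_deriv]
  have hfact : (n.factorial : ℝ) ≠ 0 := by positivity
  rw [mul_comm, mul_div_assoc, div_self hfact, mul_one]
  have hc := coeff_TT_pow k n hk hn
  rw [show cco k n = PowerSeries.coeff (R := ℝ) n (TT^k) from rfl, hc]
  have h2 : (2:ℝ) ^ ((k:ℤ) - (n:ℤ)) = 2^k / 2^n := by
    rw [zpow_sub₀ (by norm_num : (2:ℝ) ≠ 0), zpow_natCast, zpow_natCast]
  rw [h2]
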